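/- Let f ∈ C^N(ℝ) with Θ := sup_{t∈ℝ} |f^{(N)}(t)| < ∞, let j ∈ ℕ, and let n ≥ 1 be an integer. Set C_φ := sup_{τ∈[0,3N−1]} |(M₁ − τ)^N φ(τ)| and Ω := 1 + (3N−2)/2^j. Then for every x ∈ [0,1], the n-tuple integrals satisfy the pointwise error bound |f^{∫n}(x) − (P̃^j f)^{∫n}(x)| ≤ 2^{−jN} · Ω(3N−1)/(N!·(n−1)!) · Θ · C_φ · x^{n−1}. -/

import Mathlib

open MeasureTheory

/-- The `n`-tuple iterated integral `g^{∫n}(x) = ∫₀^x ∫₀^{ξ_n} ⋯ ∫₀^{ξ₂} g(ξ₁) dξ₁ ⋯ dξ_n`. -/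
noncomputable def iterInt (g : ℝ → ℝ) : ℕ → ℝ → ℝ
  | 0 => g
  | n + 1 => fun x => ∫ t in (0 : ℝ)..x, iterInt g n t

/-- The quasi-interpolant `(P̃^j f)(x) = ∑_{k=2−3N}^{2^j−1} f((k+M₁)/2^j) φ(2^j x − k)`. -/
noncomputable def quasiInterp (N : ℕ) (M₁ : ℝ) (φ : ℝ → ℝ) (j : ℕ) (f : ℝ → ℝ)
    (x : ℝ) : ℝ :=
  ∑ k ∈ Finset.Icc (2 - 3 * (N : ℤ)) (2 ^ j - 1),
    f (((k : ℝ) + M₁) / 2 ^ j) * φ (2 ^ j * x - (k : ℝ))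

open Set intervalIntegral

lemma myIDW {f : ℝ → ℝ} {n m : ℕ} (hf : ContDiff ℝ (n:ℕ∞) f) (hm : m ≤ n) {s : Set ℝ}
    (hs : UniqueDiffOn ℝ s) {x : ℝ} (hx : x ∈ s) :
    iteratedDerivWithin m f s x = iteratedDeriv m f x := by
  rw [iteratedDerivWithin_eq_iteratedFDerivWithin, iteratedDeriv_eq_iteratedFDeriv]
  congr 1
  exact (((contDiff_iff_ftaylorSeries.mp hf).hasFTaylorSeriesUpToOn
    s).eq_iteratedFDerivWithin_of_uniqueDiffOn (by exact_mod_cast hm) hs hx).symm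

lemma taylor_bound_lt {N : ℕ} (hN : 1 ≤ N) {f : ℝ → ℝ} (hf : ContDiff ℝ (N:ℕ∞) f) {Θ : ℝ}
    (hΘ : ∀ s, |iteratedDeriv N f s| ≤ Θ) {t a : ℝ} (h : t < a) :
    |f a - ∑ m ∈ Finset.range N, ((m.factorial : ℝ))⁻¹ * (a - t) ^ m * iteratedDeriv m f t|
      ≤ Θ * |a - t| ^ N / N.factorial := by
  obtain ⟨n, rfl⟩ : ∃ n, N = n + 1 := ⟨N - 1, (Nat.succ_pred_eq_of_pos hN).symm⟩
  have hud : UniqueDiffOn ℝ (Icc t a) := uniqueDiffOn_Icc h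
  have hfn : ContDiffOn ℝ n f (Icc t a) :=
    (hf.of_le (by exact_mod_cast Nat.le_succ n)).contDiffOn
  have hdiff : Differentiable ℝ (iteratedDeriv n f) :=
    hf.differentiable_iteratedDeriv n (by exact_mod_cast Nat.lt_succ_self n)
  have hf' : DifferentiableOn ℝ (iteratedDerivWithin n f (Icc t a)) (Ioo t a) := by
    apply (hdiff.differentiableOn).congr
    intro y hy
    exact myIDW hf (Nat.le_succ n) hud (Ioo_subset_Icc_self hy)
  have huIcc : uIcc t a = Icc t a := uIcc_of_le h.le
  have huIoo : uIoo t a = Ioo t a := uIoo_of_le h.le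
  obtain ⟨x', hx', heq⟩ := taylor_mean_remainder_lagrange h.ne (by rwa [huIcc]) (by rwa [huIcc, huIoo])
  rw [huIcc] at heq
  rw [huIoo] at hx'
  have hsum : taylorWithinEval f n (Icc t a) t a =
      ∑ m ∈ Finset.range (n+1), ((m.factorial : ℝ))⁻¹ * (a - t) ^ m * iteratedDeriv m f t := by
    rw [taylor_within_apply]
    refine Finset.sum_congr rfl fun m hm => ?_
    rw [myIDW hf (((Nat.lt_succ_iff.mp (Finset.mem_range.mp hm))).trans (Nat.le_succ n)) hud
      (left_mem_Icc.mpr h.le), smul_eq_mul]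
  rw [← hsum, heq, myIDW hf le_rfl hud (Ioo_subset_Icc_self hx')]
  rw [abs_div, abs_mul, abs_pow]
  rw [abs_of_nonneg (by positivity : (0:ℝ) ≤ ((n+1).factorial : ℝ))]
  gcongr
  exact hΘ x'

lemma taylor_bound {N : ℕ} (hN : 1 ≤ N) {f : ℝ → ℝ} (hf : ContDiff ℝ (N:ℕ∞) f) {Θ : ℝ}
    (hΘ : ∀ s, |iteratedDeriv N f s| ≤ Θ) (t a : ℝ) :
    |f a - ∑ m ∈ Finset.range N, ((m.factorial : ℝ))⁻¹ * (a - t) ^ m * iteratedDeriv m f t|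
      ≤ Θ * |a - t| ^ N / N.factorial := by
  rcases lt_trichotomy t a with h | h | h
  · exact taylor_bound_lt hN hf hΘ h
  · subst h
    have h0 : (0:ℝ) ≤ Θ := le_trans (abs_nonneg _) (hΘ 0)
    have : ∑ m ∈ Finset.range N, ((m.factorial : ℝ))⁻¹ * (t - t) ^ m * iteratedDeriv m f t
        = f t := by
      rw [Finset.sum_eq_single 0]
      · simp
      · intro m _ hm
        rcases Nat.exists_eq_succ_of_ne_zero hm with ⟨l, rfl⟩
        simp [sub_self, zero_pow]
      · intro habs; exact absurd (Finset.mem_range.mpr hN) habs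
    rw [this, sub_self, abs_zero]
    positivity
  · -- a < t : use g x = f (-x)
    have hg : ContDiff ℝ (N:ℕ∞) (fun s => f (-s)) := hf.comp (contDiff_neg)
    have hgΘ : ∀ s, |iteratedDeriv N (fun s => f (-s)) s| ≤ Θ := by
      intro s
      rw [iteratedDeriv_comp_neg, smul_eq_mul, abs_mul, abs_pow, abs_neg, abs_one, one_pow,
        one_mul]
      exact hΘ (-s)
    have key := taylor_bound_lt hN hg hgΘ (t := -t) (a := -a) (by linarith)
    simp only [neg_neg] at key
    have e1 : ∀ m ∈ Finset.range N,
        ((m.factorial : ℝ))⁻¹ * (-a - -t) ^ m * iteratedDeriv m (fun s => f (-s)) (-t)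
        = ((m.factorial : ℝ))⁻¹ * (a - t) ^ m * iteratedDeriv m f t := by
      intro m _
      rw [iteratedDeriv_comp_neg, neg_neg, smul_eq_mul]
      have h1 : (-a - -t : ℝ) ^ m = (-1:ℝ)^m * (a - t)^m := by
        rw [← neg_pow]; congr 1; ring
      rw [h1]; ring_nf
      rw [show m*2 = 2*m from mul_comm m 2, pow_mul]
      norm_num
    rw [Finset.sum_congr rfl e1] at key
    have : |-a - -t| = |a - t| := by rw [show (-a - -t : ℝ) = -(a-t) by ring, abs_neg]
    rwa [this] at key

lemma bddMeas_intInt {g : ℝ → ℝ} (hg : Measurable g) {C : ℝ} (hC : ∀ x, |g x| ≤ C)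
    (a b : ℝ) : IntervalIntegrable g volume a b := by
  rw [intervalIntegrable_iff]
  haveI : IsFiniteMeasure ((volume : Measure ℝ).restrict (Set.uIoc a b)) :=
    ⟨by rw [Measure.restrict_apply_univ]; exact measure_Ioc_lt_top⟩
  exact (integrable_const C).mono' hg.aestronglyMeasurable
    (Filter.Eventually.of_forall fun x => by simpa [Real.norm_eq_abs] using hC x)

lemma iterInt_cont {g : ℝ → ℝ} (hg : ∀ a b, IntervalIntegrable g volume a b) :
    ∀ n, 1 ≤ n → Continuous (iterInt g n) := by
  intro n hn
  induction n with
  | zero => omega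
  | succ m ih =>
    show Continuous fun x => ∫ t in (0:ℝ)..x, iterInt g m t
    rcases Nat.eq_zero_or_pos m with rfl | hm
    · exact continuous_primitive hg 0
    · exact continuous_primitive (fun a b => ((ih hm).intervalIntegrable a b)) 0

lemma iterInt_sub {f g : ℝ → ℝ} (hf : ∀ a b, IntervalIntegrable f volume a b)
    (hg : ∀ a b, IntervalIntegrable g volume a b) :
    ∀ n, 1 ≤ n → ∀ x, iterInt (fun s => f s - g s) n x = iterInt f n x - iterInt g n x := by
  intro n hn
  induction n with
  | zero => omega
  | succ m ih =>
    intro x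
    show ∫ t in (0:ℝ)..x, iterInt (fun s => f s - g s) m t = _
    rcases Nat.eq_zero_or_pos m with rfl | hm
    · exact integral_sub (hf 0 x) (hg 0 x)
    · have : ∀ t, iterInt (fun s => f s - g s) m t = iterInt f m t - iterInt g m t := ih hm
      rw [intervalIntegral.integral_congr (fun t _ => this t)]
      exact integral_sub ((iterInt_cont hf m hm).intervalIntegrable 0 x)
        ((iterInt_cont hg m hm).intervalIntegrable 0 x)

lemma iterInt_bound {D : ℝ → ℝ} (hD : ∀ a b, IntervalIntegrable D volume a b) {E : ℝ}
    (hE : 0 ≤ E) (hae : ∀ᵐ t ∂(volume : Measure ℝ), t ∈ Ioc (0:ℝ) 1 → |D t| ≤ E) :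
    ∀ n, 1 ≤ n → ∀ x ∈ Icc (0:ℝ) 1,
      |iterInt D n x| ≤ E * x ^ n / n.factorial := by
  intro n hn
  induction n with
  | zero => omega
  | succ m ih =>
    intro x hx
    obtain ⟨hx0, hx1⟩ := hx
    show |∫ t in (0:ℝ)..x, iterInt D m t| ≤ _
    rcases Nat.eq_zero_or_pos m with rfl | hm
    · have h1 : ∀ᵐ t ∂(volume : Measure ℝ).restrict (Set.uIoc (0:ℝ) x), ‖D t‖ ≤ E := by
        rw [Set.uIoc_of_le hx0]
        have := ae_restrict_of_ae (μ := (volume : Measure ℝ)) (s := Ioc (0:ℝ) x) hae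
        filter_upwards [this, ae_restrict_mem measurableSet_Ioc] with t h1 h2
        exact h1 ⟨h2.1, h2.2.trans hx1⟩
      have := intervalIntegral.norm_integral_le_abs_of_norm_le h1 (intervalIntegrable_const)
      simp only [intervalIntegral.integral_const, smul_eq_mul, sub_zero] at this
      calc |∫ t in (0:ℝ)..x, iterInt D 0 t| ≤ |x * E| := this
        _ ≤ E * x ^ 1 / (Nat.factorial 1) := by
            rw [abs_of_nonneg (by positivity)]; simp [mul_comm]
    · have hcont := iterInt_cont hD m hm
      have h1 : ∀ t ∈ Set.uIoc (0:ℝ) x, ‖iterInt D m t‖ ≤ E * t ^ m / m.factorial := by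
        intro t ht
        rw [Set.uIoc_of_le hx0] at ht
        exact ih hm t ⟨ht.1.le, ht.2.trans hx1⟩
      have h1' : ∀ᵐ t ∂(volume : Measure ℝ).restrict (Set.uIoc (0:ℝ) x),
          ‖iterInt D m t‖ ≤ E / m.factorial * t ^ m := by
        refine ae_restrict_of_forall_mem measurableSet_uIoc fun t ht => ?_
        calc ‖iterInt D m t‖ ≤ E * t ^ m / m.factorial := h1 t ht
          _ = E / m.factorial * t ^ m := by ring
      have hgint : IntervalIntegrable (fun t => E / m.factorial * t ^ m) volume 0 x :=
        (Continuous.intervalIntegrable (by continuity)) 0 x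
      have h2 := intervalIntegral.norm_integral_le_abs_of_norm_le h1' hgint
      have h3 : ∫ t in (0:ℝ)..x, E / m.factorial * t ^ m
          = E * x ^ (m+1) / (m+1).factorial := by
        rw [intervalIntegral.integral_const_mul, integral_pow, zero_pow (Nat.succ_ne_zero m),
          sub_zero, Nat.factorial_succ]
        have hm1 : ((m:ℝ) + 1) ≠ 0 := by positivity
        have hmf : ((m.factorial : ℕ):ℝ) ≠ 0 := by positivity
        push_cast
        field_simp
      rw [h3] at h2
      calc |∫ t in (0:ℝ)..x, iterInt D m t|
          ≤ |E * x ^ (m+1) / (m+1).factorial| := h2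
        _ = E * x ^ (m+1) / (m+1).factorial := abs_of_nonneg (by positivity)

lemma pointwise_bound
    (N : ℕ) (hN : 2 ≤ N) (M₁ : ℝ) (φ : ℝ → ℝ)
    (hφsupp : ∀ t : ℝ, t ∉ Set.Icc (0 : ℝ) (3 * N - 1) → φ t = 0)
    (hrep : ∀ y : ℝ, ∀ m : ℕ, m ≤ N - 1 →
      ∑' k : ℤ, ((k : ℝ) + M₁ - y) ^ m * φ (y - (k : ℝ)) = if m = 0 then 1 else 0)
    (f : ℝ → ℝ) (hf : ContDiff ℝ (N : ℕ∞) f)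
    (Θ : ℝ) (hΘ : ∀ s, |iteratedDeriv N f s| ≤ Θ)
    (Cφ : ℝ) (hCφ : ∀ τ ∈ Set.Icc (0:ℝ) (3*N-1), |(M₁ - τ) ^ N * φ τ| ≤ Cφ)
    (j : ℕ) (t : ℝ) (ht0 : 0 < t) (ht1 : t ≤ 1) (hirr : ∀ k : ℤ, (2:ℝ) ^ j * t ≠ k) :
    |f t - quasiInterp N M₁ φ j f t| ≤
      (3 * N - 1) * Θ * Cφ / (N.factorial * 2 ^ (j * N)) := by
  have hΘ0 : 0 ≤ Θ := le_trans (abs_nonneg _) (hΘ 0)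
  set y : ℝ := 2 ^ j * t with hy
  have hy0 : 0 < y := by positivity
  have hyj : y ≤ 2 ^ j := by
    calc y = 2 ^ j * t := rfl
      _ ≤ 2 ^ j * 1 := by
          have : (0:ℝ) < 2 ^ j := by positivity
          nlinarith
      _ = 2 ^ j := mul_one _
  have hfl : (⌊y⌋ : ℝ) < y := lt_of_le_of_ne (Int.floor_le y) fun h => hirr ⌊y⌋ h.symm
  have hfl2 : y < (⌊y⌋ : ℝ) + 1 := Int.lt_floor_add_one y
  have hfl0 : 0 ≤ ⌊y⌋ := Int.floor_nonneg.mpr hy0.le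
  have hylt : y < 2 ^ j := lt_of_le_of_ne hyj (by
    intro h; exact hirr (2 ^ j) (by push_cast; exact h))
  set K : Finset ℤ := Finset.Icc (⌊y⌋ + 2 - 3 * N) ⌊y⌋ with hK
  -- membership facts
  have hout : ∀ k : ℤ, k ∉ K → φ (y - k) = 0 := by
    intro k hk
    rw [hK, Finset.mem_Icc, not_and_or, not_le, not_le] at hk
    apply hφsupp
    rw [Set.mem_Icc, not_and_or, not_le, not_le]
    rcases hk with h | h
    · right
      have : (k : ℝ) ≤ (⌊y⌋ : ℝ) + 1 - 3 * N := by exact_mod_cast (by omega : k ≤ ⌊y⌋ + 1 - 3*N)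
      linarith
    · left
      have : (⌊y⌋ : ℝ) + 1 ≤ (k : ℝ) := by exact_mod_cast (by omega : ⌊y⌋ + 1 ≤ k)
      linarith
  have hin : ∀ k ∈ K, (0:ℝ) ≤ y - k ∧ y - (k:ℝ) ≤ 3 * N - 1 := by
    intro k hk
    rw [hK, Finset.mem_Icc] at hk
    have h1 : ((⌊y⌋:ℝ) + 2 - 3 * N) ≤ (k:ℝ) := by exact_mod_cast hk.1
    have h2 : (k:ℝ) ≤ (⌊y⌋:ℝ) := by exact_mod_cast hk.2
    constructor <;> linarith
  have htsum : ∀ g : ℤ → ℝ, ∑' k : ℤ, g k * φ (y - k) = ∑ k ∈ K, g k * φ (y - k) := by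
    intro g
    exact tsum_eq_sum fun k hk => by rw [hout k hk, mul_zero]
  have hrepK : ∀ m : ℕ, m ≤ N - 1 →
      ∑ k ∈ K, ((k : ℝ) + M₁ - y) ^ m * φ (y - k) = if m = 0 then 1 else 0 := by
    intro m hm
    rw [← htsum fun k => ((k : ℝ) + M₁ - y) ^ m]
    exact hrep y m hm
  -- quasiInterp over K
  have hKsub : K ⊆ Finset.Icc (2 - 3 * (N : ℤ)) (2 ^ j - 1) := by
    intro k hk
    rw [hK, Finset.mem_Icc] at hk
    rw [Finset.mem_Icc]
    have : ⌊y⌋ ≤ 2 ^ j - 1 := by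
      have : (⌊y⌋ : ℝ) < 2 ^ j := lt_of_le_of_lt (Int.floor_le y) hylt
      have : ⌊y⌋ < (2:ℤ) ^ j := by exact_mod_cast this
      omega
    omega
  have hquasiK : quasiInterp N M₁ φ j f t
      = ∑ k ∈ K, f (((k : ℝ) + M₁) / 2 ^ j) * φ (y - k) := by
    rw [quasiInterp]
    exact (Finset.sum_subset hKsub fun k _ hnk => by rw [hout k hnk, mul_zero]).symm
  -- Taylor reproduction
  have hTay : f t = ∑ k ∈ K,
      (∑ m ∈ Finset.range N, ((m.factorial : ℝ))⁻¹ * (((k : ℝ) + M₁) / 2 ^ j - t) ^ m *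
        iteratedDeriv m f t) * φ (y - k) := by
    have step : ∀ k : ℤ, ∀ m : ℕ, (((k : ℝ) + M₁) / 2 ^ j - t) ^ m
        = ((2:ℝ) ^ j)⁻¹ ^ m * ((k : ℝ) + M₁ - y) ^ m := by
      intro k m
      rw [← mul_pow]
      congr 1
      field_simp [hy]
      rw [hy]
    calc f t = ∑ m ∈ Finset.range N, ((m.factorial : ℝ))⁻¹ * iteratedDeriv m f t *
          (((2:ℝ) ^ j)⁻¹ ^ m * (if m = 0 then 1 else 0)) := by
          rw [Finset.sum_eq_single 0]
          · simp
          · intro m _ hm; simp [hm]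
          · intro h; exact absurd (Finset.mem_range.mpr (by omega)) h
      _ = ∑ m ∈ Finset.range N, ((m.factorial : ℝ))⁻¹ * iteratedDeriv m f t *
          (((2:ℝ) ^ j)⁻¹ ^ m * ∑ k ∈ K, ((k : ℝ) + M₁ - y) ^ m * φ (y - k)) := by
          refine Finset.sum_congr rfl fun m hm => ?_
          have hm' : m ≤ N - 1 := by have := Finset.mem_range.mp hm; omega
          rw [hrepK m hm']
      _ = ∑ m ∈ Finset.range N, ∑ k ∈ K, ((m.factorial : ℝ))⁻¹ *
            (((k : ℝ) + M₁) / 2 ^ j - t) ^ m * iteratedDeriv m f t * φ (y - k) := by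
          refine Finset.sum_congr rfl fun m _ => ?_
          rw [Finset.mul_sum, Finset.mul_sum]
          refine Finset.sum_congr rfl fun k _ => ?_
          rw [step k m]; ring
      _ = ∑ k ∈ K, (∑ m ∈ Finset.range N, ((m.factorial : ℝ))⁻¹ *
            (((k : ℝ) + M₁) / 2 ^ j - t) ^ m * iteratedDeriv m f t) * φ (y - k) := by
          rw [Finset.sum_comm]
          exact Finset.sum_congr rfl fun k _ => by rw [Finset.sum_mul]
  -- difference as a sum
  have hdiff : f t - quasiInterp N M₁ φ j f t = ∑ k ∈ K,
      ((∑ m ∈ Finset.range N, ((m.factorial : ℝ))⁻¹ * (((k : ℝ) + M₁) / 2 ^ j - t) ^ m *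
        iteratedDeriv m f t) - f (((k : ℝ) + M₁) / 2 ^ j)) * φ (y - k) := by
    rw [hquasiK, hTay, ← Finset.sum_sub_distrib]
    exact Finset.sum_congr rfl fun k _ => by ring
  -- bound each term
  have hterm : ∀ k ∈ K,
      |((∑ m ∈ Finset.range N, ((m.factorial : ℝ))⁻¹ * (((k : ℝ) + M₁) / 2 ^ j - t) ^ m *
        iteratedDeriv m f t) - f (((k : ℝ) + M₁) / 2 ^ j)) * φ (y - k)|
        ≤ Θ * Cφ / (N.factorial * 2 ^ (j * N)) := by
    intro k hk
    obtain ⟨hk1, hk2⟩ := hin k hk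
    set a : ℝ := ((k : ℝ) + M₁) / 2 ^ j with ha
    set τ : ℝ := y - k with hτ
    have haτ : a - t = (M₁ - τ) / 2 ^ j := by
      rw [ha, hτ, hy]; field_simp; ring
    have h1 : |(∑ m ∈ Finset.range N, ((m.factorial : ℝ))⁻¹ * (a - t) ^ m *
        iteratedDeriv m f t) - f a| ≤ Θ * |a - t| ^ N / N.factorial := by
      rw [abs_sub_comm]
      exact taylor_bound (by omega) hf hΘ t a
    calc |((∑ m ∈ Finset.range N, ((m.factorial : ℝ))⁻¹ * (a - t) ^ m *
          iteratedDeriv m f t) - f a) * φ τ|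
        = |(∑ m ∈ Finset.range N, ((m.factorial : ℝ))⁻¹ * (a - t) ^ m *
          iteratedDeriv m f t) - f a| * |φ τ| := abs_mul _ _
      _ ≤ (Θ * |a - t| ^ N / N.factorial) * |φ τ| := by
          exact mul_le_mul_of_nonneg_right h1 (abs_nonneg _)
      _ = Θ / N.factorial * (|a - t| ^ N * |φ τ|) := by ring
      _ = Θ / N.factorial * (|(M₁ - τ) ^ N * φ τ| / 2 ^ (j * N)) := by
          congr 1
          have h2 : |a - t| = |M₁ - τ| / 2 ^ j := by
            rw [haτ, abs_div, abs_of_nonneg (by positivity : (0:ℝ) ≤ (2:ℝ) ^ j)]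
          rw [h2, div_pow, ← pow_mul, abs_mul, abs_pow, div_mul_eq_mul_div]
      _ ≤ Θ / N.factorial * (Cφ / 2 ^ (j * N)) := by
          apply mul_le_mul_of_nonneg_left _ (by positivity)
          apply div_le_div_of_nonneg_right _ (by positivity)
          · exact hCφ τ ⟨hk1, hk2⟩
      _ = Θ * Cφ / (N.factorial * 2 ^ (j * N)) := by ring
  -- card of K
  have hcard : (K.card : ℝ) = 3 * N - 1 := by
    rw [hK, Int.card_Icc]
    have : ⌊y⌋ + 1 - (⌊y⌋ + 2 - 3 * N) = 3 * (N:ℤ) - 1 := by ring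
    rw [this]
    have h35 : (0:ℤ) ≤ 3 * (N:ℤ) - 1 := by omega
    have h36 : (((3 * (N:ℤ) - 1).toNat : ℤ) : ℝ) = ((3 * (N:ℤ) - 1 : ℤ) : ℝ) := by
      rw [Int.toNat_of_nonneg h35]
    rw [show (((3 * (N:ℤ) - 1).toNat : ℕ) : ℝ) = (((3 * (N:ℤ) - 1).toNat : ℤ) : ℝ) by
      push_cast; ring, h36]
    push_cast
    ring
  calc |f t - quasiInterp N M₁ φ j f t|
      ≤ ∑ k ∈ K, |((∑ m ∈ Finset.range N, ((m.factorial : ℝ))⁻¹ *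
          (((k : ℝ) + M₁) / 2 ^ j - t) ^ m * iteratedDeriv m f t) -
          f (((k : ℝ) + M₁) / 2 ^ j)) * φ (y - k)| := by
        rw [hdiff]; exact Finset.abs_sum_le_sum_abs _ _
    _ ≤ ∑ _k ∈ K, Θ * Cφ / (N.factorial * 2 ^ (j * N)) := Finset.sum_le_sum hterm
    _ = (K.card : ℝ) * (Θ * Cφ / (N.factorial * 2 ^ (j * N))) := by
        rw [Finset.sum_const, nsmul_eq_mul]
    _ = (3 * N - 1) * Θ * Cφ / (N.factorial * 2 ^ (j * N)) := by rw [hcard]; ring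


theorem pointwise_error_nTuple_integral
    (N : ℕ) (hN : 2 ≤ N) (M₁ : ℝ) (φ : ℝ → ℝ)
    (hφmeas : Measurable φ) (hφbdd : ∃ B, ∀ t, |φ t| ≤ B)
    (hφsupp : ∀ t : ℝ, t ∉ Set.Icc (0 : ℝ) (3 * N - 1) → φ t = 0)
    (hrep : ∀ y : ℝ, ∀ m : ℕ, m ≤ N - 1 →
      ∑' k : ℤ, ((k : ℝ) + M₁ - y) ^ m * φ (y - (k : ℝ)) = if m = 0 then 1 else 0)
    (f : ℝ → ℝ) (hf : ContDiff ℝ (N : ℕ∞) f)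
    (Θ : ℝ) (hΘ : IsLUB (Set.range fun t => |iteratedDeriv N f t|) Θ)
    (Cφ : ℝ)
    (hCφ : IsLUB ((fun τ => |(M₁ - τ) ^ N * φ τ|) '' Set.Icc (0 : ℝ) (3 * N - 1)) Cφ)
    (j : ℕ) (n : ℕ) (hn : 1 ≤ n) (x : ℝ) (hx : x ∈ Set.Icc (0 : ℝ) 1) :
    |iterInt f n x - iterInt (quasiInterp N M₁ φ j f) n x| ≤
      ((2 : ℝ) ^ (j * N))⁻¹ *
        ((1 + (3 * (N : ℝ) - 2) / 2 ^ j) * (3 * (N : ℝ) - 1) /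
          (N.factorial * (n - 1).factorial)) * Θ * Cφ * x ^ (n - 1) := by
  have hN2 : (2:ℝ) ≤ (N:ℝ) := by exact_mod_cast hN
  -- upper bounds from the LUBs
  have hΘub : ∀ s, |iteratedDeriv N f s| ≤ Θ := fun s => hΘ.1 (Set.mem_range_self s)
  have hΘ0 : 0 ≤ Θ := le_trans (abs_nonneg _) (hΘub 0)
  have h3N : (0:ℝ) ≤ 3 * (N:ℝ) - 1 := by linarith
  have hCφub : ∀ τ ∈ Set.Icc (0:ℝ) (3*N-1), |(M₁ - τ) ^ N * φ τ| ≤ Cφ := fun τ hτ =>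
    hCφ.1 (Set.mem_image_of_mem _ hτ)
  have hCφ0 : 0 ≤ Cφ := le_trans (abs_nonneg _) (hCφub 0 ⟨le_rfl, by linarith⟩)
  -- integrability of f and the quasi-interpolant
  obtain ⟨B, hB⟩ := hφbdd
  have hgmeas : Measurable (quasiInterp N M₁ φ j f) := by
    unfold quasiInterp
    exact Finset.measurable_sum _ fun k _ => measurable_const.mul
      (hφmeas.comp ((measurable_const.mul measurable_id).sub measurable_const))
  have hgbdd : ∀ s, |quasiInterp N M₁ φ j f s| ≤
      ∑ k ∈ Finset.Icc (2 - 3 * (N : ℤ)) (2 ^ j - 1), |f (((k : ℝ) + M₁) / 2 ^ j)| * B := by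
    intro s
    refine (Finset.abs_sum_le_sum_abs _ _).trans (Finset.sum_le_sum fun k _ => ?_)
    rw [abs_mul]
    exact mul_le_mul_of_nonneg_left (hB _) (abs_nonneg _)
  have hg : ∀ a b, IntervalIntegrable (quasiInterp N M₁ φ j f) volume a b :=
    bddMeas_intInt hgmeas hgbdd
  have hfint : ∀ a b, IntervalIntegrable f volume a b := fun a b =>
    hf.continuous.intervalIntegrable a b
  set D : ℝ → ℝ := fun s => f s - quasiInterp N M₁ φ j f s with hD
  have hDint : ∀ a b, IntervalIntegrable D volume a b := fun a b => (hfint a b).sub (hg a b)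
  set E : ℝ := (3 * (N:ℝ) - 1) * Θ * Cφ / (N.factorial * 2 ^ (j * N)) with hE
  have hE0 : 0 ≤ E := by
    apply div_nonneg (mul_nonneg (mul_nonneg h3N hΘ0) hCφ0)
    positivity
  -- a.e. pointwise bound
  have hae : ∀ᵐ t ∂(volume : Measure ℝ), t ∈ Set.Ioc (0:ℝ) 1 → |D t| ≤ E := by
    have hS0 : (volume : Measure ℝ) (Set.range (fun k : ℤ => (k : ℝ) / 2 ^ j)) = 0 :=
      (Set.countable_range _).measure_zero _
    have h1 : ∀ᵐ t ∂(volume : Measure ℝ), t ∉ Set.range (fun k : ℤ => (k : ℝ) / 2 ^ j) := by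
      rw [ae_iff]
      simpa only [not_not, Set.setOf_mem_eq] using hS0
    filter_upwards [h1] with t htS ht
    refine pointwise_bound N hN M₁ φ hφsupp hrep f hf Θ hΘub Cφ hCφub j t ht.1 ht.2 ?_
    intro k hk
    refine htS ⟨k, ?_⟩
    have h2 : ((2:ℝ) ^ j) ≠ 0 := by positivity
    field_simp [eq_comm] at hk ⊢
    linarith [hk]
  have hEq := iterInt_sub hfint hg n hn x
  have H := iterInt_bound hDint hE0 hae n hn x hx
  rw [hD] at H
  rw [hEq] at H
  -- final arithmetic
  obtain ⟨m, rfl⟩ : ∃ m, n = m + 1 := ⟨n - 1, by omega⟩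
  simp only [Nat.add_sub_cancel]
  obtain ⟨hx0, hx1⟩ := hx
  have hΩ : (1:ℝ) ≤ 1 + (3 * (N:ℝ) - 2) / 2 ^ j := by
    have h4 : (0:ℝ) ≤ (3 * (N:ℝ) - 2) / 2 ^ j := by
      apply div_nonneg (by linarith)
      positivity
    linarith
  have hfacpos : (0:ℝ) < (m.factorial : ℝ) := by exact_mod_cast m.factorial_pos
  calc |iterInt f (m+1) x - iterInt (quasiInterp N M₁ φ j f) (m+1) x|
      ≤ E * x ^ (m+1) / (m+1).factorial := H
    _ ≤ E * x ^ m / m.factorial := by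
        apply div_le_div₀ (mul_nonneg hE0 (pow_nonneg hx0 m))
          (mul_le_mul_of_nonneg_left (pow_le_pow_of_le_one hx0 hx1 (Nat.le_succ m)) hE0)
          hfacpos
        exact_mod_cast Nat.factorial_le (Nat.le_succ m)
    _ ≤ (1 + (3 * (N:ℝ) - 2) / 2 ^ j) * (E * x ^ m / m.factorial) :=
        le_mul_of_one_le_left (by positivity) hΩ
    _ = ((2 : ℝ) ^ (j * N))⁻¹ *
        ((1 + (3 * (N : ℝ) - 2) / 2 ^ j) * (3 * (N : ℝ) - 1) /
          (N.factorial * m.factorial)) * Θ * Cφ * x ^ m := by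
        rw [hE]
        have hNf : ((N.factorial : ℕ) : ℝ) ≠ 0 := by positivity
        have h2j : ((2:ℝ) ^ (j*N)) ≠ 0 := by positivity
        have hmf : ((m.factorial : ℕ) : ℝ) ≠ 0 := ne_of_gt hfacpos
        field_simp
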